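/- Let p be a PDB over a finite set T of tuples such that every p(t) is rational, let a be the maximum over all tuples of the numerators and denominators of the probabilities p(t) (written as fractions of nonnegative integers with positive denominators), and let m = |T| + 3. Let E be a set of hyperedges such that the PDB is consistent w.r.t. E, let W be any set of possible worlds, and let p^min and p^max be the minimum and maximum of Σ_{w∈W} Pr(w) over all models Pr. Then each of p^min and p^max is a rational number expressible as a fraction η/δ with integers 0 ≤ η ≤ (m·a)^m and 0 < δ ≤ (m·a)^m. -/

import Mathlib

open Finset

variable {τ : Type*} [Fintype τ] [DecidableEq τ]

/-- An interpretation of a PDB `p`: a probability distribution over possible worlds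
(subsets of the set of tuples) whose marginals agree with `p`. -/
def IsInterp (p : τ → ℝ) (Pr : Finset τ → ℝ) : Prop :=
  (∀ w, 0 ≤ Pr w) ∧ (∑ w : Finset τ, Pr w = 1) ∧
  (∀ t : τ, ∑ w ∈ Finset.univ.filter (fun w => t ∈ w), Pr w = p t)

/-- A model of the PDB `p` w.r.t. the hyperedge set `E`: an interpretation assigning
probability 0 to every world containing some hyperedge of `E`. -/
def IsModel (p : τ → ℝ) (E : Set (Finset τ)) (Pr : Finset τ → ℝ) : Prop :=
  IsInterp p Pr ∧ ∀ w : Finset τ, (∃ e ∈ E, e ⊆ w) → Pr w = 0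

/-- The PDB `p` is consistent w.r.t. `E` if a model exists. -/
def Consistent (p : τ → ℝ) (E : Set (Finset τ)) : Prop :=
  ∃ Pr, IsModel p E Pr

/-- The probability, under `Pr`, that all tuples of `S` co-exist. -/
def coexistProb (Pr : Finset τ → ℝ) (S : Finset τ) : ℝ :=
  ∑ w ∈ Finset.univ.filter (fun w => S ⊆ w), Pr w

section Aux

set_option maxHeartbeats 1000000

open Matrix

lemma det_abs_le_factorial {n : Type*} [Fintype n] [DecidableEq n] (M : Matrix n n ℤ)
    (h : ∀ i j, |M i j| ≤ 1) : |M.det| ≤ (Fintype.card n).factorial := by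
  rw [Matrix.det_apply]
  calc |∑ σ : Equiv.Perm n, Equiv.Perm.sign σ • ∏ i, M (σ i) i|
      ≤ ∑ σ : Equiv.Perm n, |Equiv.Perm.sign σ • ∏ i, M (σ i) i| :=
        Finset.abs_sum_le_sum_abs _ _
    _ ≤ ∑ _σ : Equiv.Perm n, 1 := by
        apply Finset.sum_le_sum
        intro σ _
        have h1 : |((Equiv.Perm.sign σ : ℤˣ) : ℤ)| = 1 := by
          rcases Int.units_eq_one_or (Equiv.Perm.sign σ) with h' | h' <;> simp [h']
        rw [Units.smul_def, smul_eq_mul, abs_mul, h1, one_mul]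
        calc |∏ i, M (σ i) i| = ∏ i, |M (σ i) i| := by rw [Finset.abs_prod]
          _ ≤ ∏ _i : n, 1 := Finset.prod_le_prod (fun _ _ => abs_nonneg _) (fun i _ => h _ _)
          _ = 1 := by simp
    _ = (Fintype.card n).factorial := by simp [Fintype.card_perm]

private lemma aux_convex (p : τ → ℝ) (E : Set (Finset τ)) (W : Finset (Finset τ)) (v : ℝ) :
    Convex ℝ {x : Finset τ → ℝ | IsModel p E x ∧ ∑ w ∈ W, x w = v} := by
  rintro x ⟨⟨⟨hx0, hx1, hxm⟩, hxE⟩, hxW⟩ y ⟨⟨⟨hy0, hy1, hym⟩, hyE⟩, hyW⟩ α β hα hβ hαβ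
  have key : ∀ (S : Finset (Finset τ)), ∑ w ∈ S, (α • x + β • y) w
      = α * (∑ w ∈ S, x w) + β * (∑ w ∈ S, y w) := by
    intro S
    simp only [Pi.add_apply, Pi.smul_apply, smul_eq_mul, Finset.sum_add_distrib,
      Finset.mul_sum]
  refine ⟨⟨⟨fun w => ?_, ?_, fun t => ?_⟩, fun w hw => ?_⟩, ?_⟩
  · have := add_nonneg (mul_nonneg hα (hx0 w)) (mul_nonneg hβ (hy0 w))
    simpa using this
  · rw [key, hx1, hy1]; linarith
  · rw [key, hxm, hym]; linear_combination (p t) * hαβ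
  · simp [hxE w hw, hyE w hw]
  · rw [key, hxW, hyW]; linear_combination v * hαβ

private lemma aux_compact (p : τ → ℝ) (E : Set (Finset τ)) (W : Finset (Finset τ)) (v : ℝ) :
    IsCompact {x : Finset τ → ℝ | IsModel p E x ∧ ∑ w ∈ W, x w = v} := by
  classical
  set Q := {x : Finset τ → ℝ | IsModel p E x ∧ ∑ w ∈ W, x w = v} with hQ
  have hclosed : IsClosed Q := by
    have hrw : Q = ({x : Finset τ → ℝ | ∀ w, 0 ≤ x w} ∩
        ({x | ∑ w : Finset τ, x w = 1} ∩
        ({x | ∀ t : τ, ∑ w ∈ Finset.univ.filter (fun w => t ∈ w), x w = p t} ∩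
        ({x | ∀ w : Finset τ, (∃ e ∈ E, e ⊆ w) → x w = 0} ∩
        {x | ∑ w ∈ W, x w = v})))) := by
      ext x
      simp only [hQ, Set.mem_setOf_eq, Set.mem_inter_iff, IsModel, IsInterp]
      tauto
    rw [hrw]
    refine IsClosed.inter ?_ (IsClosed.inter ?_ (IsClosed.inter ?_ (IsClosed.inter ?_ ?_)))
    · have : {x : Finset τ → ℝ | ∀ w, 0 ≤ x w} = ⋂ w, {x | 0 ≤ x w} := by
        ext x; simp
      rw [this]
      exact isClosed_iInter fun w => isClosed_le continuous_const (continuous_apply w)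
    · exact isClosed_eq (by fun_prop) continuous_const
    · have : {x : Finset τ → ℝ | ∀ t : τ, ∑ w ∈ Finset.univ.filter (fun w => t ∈ w), x w = p t}
          = ⋂ t, {x | ∑ w ∈ Finset.univ.filter (fun w => t ∈ w), x w = p t} := by ext x; simp
      rw [this]
      exact isClosed_iInter fun t => isClosed_eq (by fun_prop) continuous_const
    · have : {x : Finset τ → ℝ | ∀ w : Finset τ, (∃ e ∈ E, e ⊆ w) → x w = 0}
          = ⋂ w, {x | (∃ e ∈ E, e ⊆ w) → x w = 0} := by ext x; simp
      rw [this]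
      refine isClosed_iInter fun w => ?_
      by_cases h : ∃ e ∈ E, e ⊆ w
      · have : {x : Finset τ → ℝ | (∃ e ∈ E, e ⊆ w) → x w = 0} = {x | x w = 0} := by
          ext x; simp [h]
        rw [this]; exact isClosed_eq (continuous_apply w) continuous_const
      · have : {x : Finset τ → ℝ | (∃ e ∈ E, e ⊆ w) → x w = 0} = Set.univ := by
          ext x; simp [h]
        rw [this]; exact isClosed_univ
    · exact isClosed_eq (by fun_prop) continuous_const
  have hsub : Q ⊆ Set.pi Set.univ (fun _ : Finset τ => Set.Icc (0:ℝ) 1) := by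
    rintro x ⟨⟨⟨hx0, hx1, _⟩, _⟩, _⟩ w _
    refine ⟨hx0 w, ?_⟩
    calc x w ≤ ∑ w' : Finset τ, x w' := Finset.single_le_sum (fun i _ => hx0 i) (mem_univ w)
      _ = 1 := hx1
  exact IsCompact.of_isClosed_subset (isCompact_univ_pi fun _ => isCompact_Icc) hclosed hsub

private lemma aux_span (p : τ → ℝ) (E : Set (Finset τ)) (W : Finset (Finset τ)) (v : ℝ)
    (hface : ∀ y z, IsModel p E y → IsModel p E z →
      (∑ w ∈ W, y w) + (∑ w ∈ W, z w) = 2 * v → ∑ w ∈ W, y w = v)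
    (x : Finset τ → ℝ)
    (hxQ : x ∈ {x : Finset τ → ℝ | IsModel p E x ∧ ∑ w ∈ W, x w = v})
    (hxext : ∀ x₁ ∈ {x : Finset τ → ℝ | IsModel p E x ∧ ∑ w ∈ W, x w = v},
      ∀ x₂ ∈ {x : Finset τ → ℝ | IsModel p E x ∧ ∑ w ∈ W, x w = v},
      x ∈ openSegment ℝ x₁ x₂ → x₁ = x ∧ x₂ = x) :
    Submodule.span ℝ (Set.range (fun j : Option τ =>
      (fun w : {w : Finset τ // x w ≠ 0} =>
        j.elim 1 (fun t => if t ∈ w.1 then (1:ℝ) else 0)))) = ⊤ := by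
  classical
  obtain ⟨⟨⟨hx0, hx1, hxm⟩, hxE⟩, hxW⟩ := hxQ
  set V : Option τ → ({w : Finset τ // x w ≠ 0} → ℝ) := fun j =>
      (fun w => j.elim 1 (fun t => if t ∈ w.1 then (1:ℝ) else 0)) with hV
  by_contra hne
  have hlt : Submodule.span ℝ (Set.range V) < ⊤ := lt_of_le_of_ne le_top hne
  obtain ⟨f, hf0, hfmap⟩ := Submodule.exists_dual_map_eq_bot_of_lt_top hlt inferInstance
  have hfV : ∀ j, f (V j) = 0 := by
    intro j
    have h1 : V j ∈ Submodule.span ℝ (Set.range V) :=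
      Submodule.subset_span (Set.mem_range_self j)
    have h2 : f (V j) ∈ Submodule.map f (Submodule.span ℝ (Set.range V)) :=
      Submodule.mem_map_of_mem h1
    rw [hfmap] at h2
    simpa using h2
  set d : {w : Finset τ // x w ≠ 0} → ℝ := fun w => f (Pi.single w 1) with hd
  have hrep : ∀ y : {w : Finset τ // x w ≠ 0} → ℝ, f y = ∑ w, y w * d w := by
    intro y
    have hy : y = ∑ w, y w • (Pi.single w (1:ℝ) : {w : Finset τ // x w ≠ 0} → ℝ) := by
      ext u
      rw [Finset.sum_apply]
      simp [Pi.single_apply]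
    conv_lhs => rw [hy]
    rw [map_sum]
    apply Finset.sum_congr rfl
    intro w _
    rw [_root_.map_smul]; simp [hd, smul_eq_mul]
  have hd0 : d ≠ 0 := by
    intro h
    apply hf0
    apply LinearMap.ext
    intro y
    rw [hrep y, h]
    simp
  set dd : Finset τ → ℝ := fun w => if h : x w ≠ 0 then d ⟨w, h⟩ else 0 with hdd
  have hddzero : ∀ w, x w = 0 → dd w = 0 := by
    intro w hw
    rw [hdd]
    simp only [hw, ne_eq, not_true_eq_false]
    rw [dif_neg]
    simp
  have hddval : ∀ (w : {w : Finset τ // x w ≠ 0}), dd ↑w = d w := by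
    intro w
    rw [hdd]
    simp only [w.2, dif_pos, ne_eq, not_false_eq_true]
  -- generic sum transfer
  have helper : ∀ (h : Finset τ → ℝ), (∀ w, x w = 0 → h w = 0) →
      ∀ (g : Finset τ → Prop) (_ : DecidablePred g),
      ∑ w ∈ univ.filter g, h w =
        ∑ w : {w : Finset τ // x w ≠ 0}, (if g ↑w then h ↑w else 0) := by
    intro h hh g hg
    rw [Finset.sum_filter]
    rw [← Finset.sum_filter_of_ne (p := fun w => x w ≠ 0)
      (f := fun w => if g w then h w else 0) (s := univ) ?_]
    · rw [Finset.sum_subtype (p := fun w => x w ≠ 0)]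
      intro w; simp
    · intro w _ hw
      by_contra hxw
      apply hw
      simp [hh w hxw]
  -- marginal sums of dd vanish
  have hddm : ∀ t : τ, ∑ w ∈ univ.filter (fun w => t ∈ w), dd w = 0 := by
    intro t
    rw [helper dd hddzero _ inferInstance]
    have h5 := hfV (some t)
    rw [hrep] at h5
    have heq : (∑ w : {w : Finset τ // x w ≠ 0}, if t ∈ (w : Finset τ) then dd ↑w else 0)
        = ∑ w : {w : Finset τ // x w ≠ 0}, V (some t) w * d w := by
      apply Finset.sum_congr rfl
      intro w _
      have hv : V (some t) w = if t ∈ (w : Finset τ) then (1:ℝ) else 0 := rfl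
      rw [hv]
      by_cases h : t ∈ (w : Finset τ) <;> simp [h, hddval w]
    rw [heq]
    exact h5
  have hdds : ∑ w : Finset τ, dd w = 0 := by
    have h0 : ∑ w : Finset τ, dd w = ∑ w ∈ univ.filter (fun _ => True), dd w := by
      simp
    rw [h0, helper dd hddzero _ inferInstance]
    have h5 := hfV none
    rw [hrep] at h5
    have heq : (∑ w : {w : Finset τ // x w ≠ 0}, if True then dd ↑w else 0)
        = ∑ w : {w : Finset τ // x w ≠ 0}, V none w * d w := by
      apply Finset.sum_congr rfl
      intro w _
      have hv : V none w = 1 := rfl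
      rw [hv]
      simp [hddval w]
    rw [heq]
    exact h5
  -- epsilon
  haveI hSne : Nonempty {w : Finset τ // x w ≠ 0} := by
    by_contra h
    rw [not_nonempty_iff] at h
    have : ∑ w : Finset τ, x w = 0 := by
      apply Finset.sum_eq_zero
      intro w _
      by_contra hw
      exact h.false ⟨w, hw⟩
    rw [hx1] at this; norm_num at this
  set c₁ : ℝ := (univ : Finset {w : Finset τ // x w ≠ 0}).inf' (univ_nonempty) (fun w => x ↑w)
    with hc₁
  set c₂ : ℝ := (univ : Finset {w : Finset τ // x w ≠ 0}).sup' (univ_nonempty) (fun w => |d w|)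
    with hc₂
  have hc₁pos : 0 < c₁ := by
    rw [hc₁, Finset.lt_inf'_iff]
    intro w _
    exact lt_of_le_of_ne (hx0 ↑w) (Ne.symm w.2)
  have hc₂nn : 0 ≤ c₂ := by
    obtain ⟨w0⟩ := hSne
    exact le_trans (abs_nonneg (d w0)) (Finset.le_sup' (fun w => |d w|) (mem_univ w0))
  set ε : ℝ := c₁ / (c₂ + 1) with hε
  have hεpos : 0 < ε := div_pos hc₁pos (by linarith)
  have hεbound : ∀ w : Finset τ, ε * |dd w| ≤ x w := by
    intro w
    by_cases h : x w ≠ 0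
    · have hddw : dd w = d ⟨w, h⟩ := hddval ⟨w, h⟩
      have h1 : |dd w| ≤ c₂ := by
        rw [hddw]
        exact Finset.le_sup' (fun w => |d w|) (mem_univ (⟨w, h⟩ : {w // x w ≠ 0}))
      have h2 : c₁ ≤ x w :=
        Finset.inf'_le (fun w : {w // x w ≠ 0} => x ↑w) (mem_univ (⟨w, h⟩ : {w // x w ≠ 0}))
      have h3 : ε * |dd w| ≤ ε * c₂ := mul_le_mul_of_nonneg_left h1 (le_of_lt hεpos)
      have h4 : ε * c₂ ≤ c₁ := by
        rw [hε, div_mul_eq_mul_div, div_le_iff₀ (by linarith)]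
        nlinarith
      linarith
    · push_neg at h
      rw [hddzero w h, h]
      simp
  -- perturbed models
  have hpert : ∀ s : ℝ, |s| ≤ ε → IsModel p E (x + s • dd) := by
    intro s hs
    refine ⟨⟨fun w => ?_, ?_, fun t => ?_⟩, fun w hw => ?_⟩
    · have h1 : |s * dd w| ≤ ε * |dd w| := by
        rw [abs_mul]
        exact mul_le_mul_of_nonneg_right hs (abs_nonneg _)
      have h0 := hεbound w
      have h2 : -(x w) ≤ s * dd w := by
        have := neg_abs_le (s * dd w)
        linarith
      simp only [Pi.add_apply, Pi.smul_apply, smul_eq_mul]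
      linarith
    · simp only [Pi.add_apply, Pi.smul_apply, smul_eq_mul, Finset.sum_add_distrib,
        ← Finset.mul_sum, hx1, hdds]
      ring
    · simp only [Pi.add_apply, Pi.smul_apply, smul_eq_mul, Finset.sum_add_distrib,
        ← Finset.mul_sum, hxm t, hddm t]
      ring
    · have h1 : x w = 0 := hxE w hw
      have h2 : dd w = 0 := hddzero w h1
      simp only [Pi.add_apply, Pi.smul_apply, smul_eq_mul, h1, h2]
      ring
  have hWsum : ∀ s : ℝ, ∑ w ∈ W, (x + s • dd) w = v + s * (∑ w ∈ W, dd w) := by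
    intro s
    simp only [Pi.add_apply, Pi.smul_apply, smul_eq_mul, Finset.sum_add_distrib,
      ← Finset.mul_sum, hxW]
  have hyp : IsModel p E (x + ε • dd) := hpert ε (by rw [abs_of_pos hεpos])
  have hym : IsModel p E (x + (-ε) • dd) := hpert (-ε) (by rw [abs_neg, abs_of_pos hεpos])
  have hsum2 : (∑ w ∈ W, (x + ε • dd) w) + (∑ w ∈ W, (x + (-ε) • dd) w) = 2 * v := by
    rw [hWsum, hWsum]; ring
  have hfe : ∑ w ∈ W, (x + ε • dd) w = v := hface _ _ hyp hym hsum2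
  have hfe' : ∑ w ∈ W, (x + (-ε) • dd) w = v := by linarith
  have hseg : x ∈ openSegment ℝ (x + ε • dd) (x + (-ε) • dd) := by
    refine ⟨1/2, 1/2, by norm_num, by norm_num, by norm_num, ?_⟩
    ext w
    simp only [Pi.add_apply, Pi.smul_apply, smul_eq_mul]
    ring
  have hext := hxext _ ⟨hyp, hfe⟩ _ ⟨hym, hfe'⟩ hseg
  have hdd0 : dd = 0 := by
    have h1 : x + ε • dd = x := hext.1
    funext w
    have h2 := congrFun h1 w
    simp only [Pi.add_apply, Pi.smul_apply, smul_eq_mul] at h2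
    have h3 : ε * dd w = 0 := by linarith
    rcases mul_eq_zero.1 h3 with h | h
    · exact absurd h (ne_of_gt hεpos)
    · simp [h]
  apply hd0
  funext w
  rw [← hddval w, hdd0]
  simp

private lemma aux_cramer (p : τ → ℝ) (num den : τ → ℕ) (hden : ∀ t, 0 < den t)
    (hfrac : ∀ t, p t = (num t : ℝ) / (den t : ℝ))
    (a : ℕ) (hdena : ∀ t, den t ≤ a)
    (W : Finset (Finset τ)) (v : ℝ) (hv0 : 0 ≤ v) (hv1 : v ≤ 1)
    (x : Finset τ → ℝ)
    (hx0 : ∀ w, 0 ≤ x w) (hx1 : ∑ w : Finset τ, x w = 1)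
    (hxm : ∀ t : τ, ∑ w ∈ Finset.univ.filter (fun w => t ∈ w), x w = p t)
    (hxW : ∑ w ∈ W, x w = v)
    (hspan : Submodule.span ℝ (Set.range (fun j : Option τ =>
      (fun w : {w : Finset τ // x w ≠ 0} =>
        j.elim 1 (fun t => if t ∈ w.1 then (1:ℝ) else 0)))) = ⊤) :
    ∃ η δ : ℕ, 0 < δ ∧ η ≤ δ ∧
      δ ≤ (Fintype.card τ + 1).factorial * a ^ (Fintype.card τ) ∧
      v = (η : ℝ) / (δ : ℝ) := by
  classical
  set V : Option τ → ({w : Finset τ // x w ≠ 0} → ℝ) := fun j =>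
      (fun w => j.elim 1 (fun t => if t ∈ w.1 then (1:ℝ) else 0)) with hV
  -- sum transfer helper
  have helper : ∀ (h : Finset τ → ℝ), (∀ w, x w = 0 → h w = 0) →
      ∀ (g : Finset τ → Prop) (_ : DecidablePred g),
      ∑ w ∈ univ.filter g, h w =
        ∑ w : {w : Finset τ // x w ≠ 0}, (if g ↑w then h ↑w else 0) := by
    intro h hh g hg
    rw [Finset.sum_filter]
    rw [← Finset.sum_filter_of_ne (p := fun w => x w ≠ 0)
      (f := fun w => if g w then h w else 0) (s := univ) ?_]
    · rw [Finset.sum_subtype (p := fun w => x w ≠ 0)]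
      intro w; simp
    · intro w _ hw
      by_contra hxw
      apply hw
      simp [hh w hxw]
  have hxzero : ∀ w : Finset τ, x w = 0 → x w = 0 := fun _ h => h
  -- independent spanning subfamily
  obtain ⟨s, hs_sub, hs_span, hs_li⟩ := exists_linearIndependent ℝ (Set.range V)
  haveI : Fintype s := Set.Finite.fintype ((Set.finite_range V).subset hs_sub)
  have hb : Module.Basis s ℝ ({w : Finset τ // x w ≠ 0} → ℝ) :=
    Module.Basis.mk hs_li (by rw [Subtype.range_coe, hs_span, hspan])
  have hcard : Fintype.card s = Fintype.card {w : Finset τ // x w ≠ 0} := by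
    rw [← Module.finrank_eq_card_basis hb, Module.finrank_pi]
  have g0 : ∀ r : s, ∃ j : Option τ, V j = ↑r := fun r => hs_sub r.2
  choose gj hgj using g0
  have hginj : Function.Injective gj := by
    intro r r' h
    apply Subtype.ext
    rw [← hgj r, ← hgj r', h]
  have hcard_le : Fintype.card s ≤ Fintype.card τ + 1 := by
    have := Fintype.card_le_of_injective gj hginj
    simpa [Fintype.card_option] using this
  set e : {w : Finset τ // x w ≠ 0} ≃ s := Fintype.equivOfCardEq hcard.symm with he
  -- real matrix
  set A : Matrix {w : Finset τ // x w ≠ 0} {w : Finset τ // x w ≠ 0} ℝ :=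
    fun i w => ((e i : s) : {w : Finset τ // x w ≠ 0} → ℝ) w with hA
  have hAV : ∀ i w, A i w = V (gj (e i)) w := by
    intro i w
    rw [hA]
    simp only
    rw [hgj (e i)]
  -- determinant nonzero
  have hli2 : LinearIndependent ℝ
      (fun i : {w : Finset τ // x w ≠ 0} => ((e i : s) : {w : Finset τ // x w ≠ 0} → ℝ)) :=
    hs_li.comp e e.injective
  have hdet : A.det ≠ 0 := by
    intro h0
    obtain ⟨u, hu0, huA⟩ := Matrix.exists_vecMul_eq_zero_iff.mpr h0
    have hsum : ∑ i, u i • ((e i : s) : {w : Finset τ // x w ≠ 0} → ℝ) = 0 := by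
      funext w
      have := congrFun huA w
      simp only [Matrix.vecMul, dotProduct, Pi.zero_apply] at this ⊢
      rw [Finset.sum_apply]
      simpa [hA, smul_eq_mul] using this
    have hall := Fintype.linearIndependent_iff.mp hli2 u hsum
    exact hu0 (funext hall)
  -- the linear system
  set xS : {w : Finset τ // x w ≠ 0} → ℝ := fun w => x ↑w with hxS
  set bb : {w : Finset τ // x w ≠ 0} → ℝ := fun i => (gj (e i)).elim 1 (fun t => p t) with hbb
  have hsys : A *ᵥ xS = bb := by
    funext i
    have : (A *ᵥ xS) i = ∑ w : {w : Finset τ // x w ≠ 0}, V (gj (e i)) w * x ↑w := by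
      simp only [Matrix.mulVec, dotProduct]
      apply Finset.sum_congr rfl
      intro w _
      rw [hAV]
    rw [this]
    rcases hcase : gj (e i) with _ | t
    · have h1 : ∑ w : {w : Finset τ // x w ≠ 0}, V none w * x ↑w
          = ∑ w : {w : Finset τ // x w ≠ 0}, (if True then x ↑w else 0) := by
        apply Finset.sum_congr rfl; intro w _
        have hv1' : V none w = 1 := rfl
        rw [hv1']; simp
      rw [h1, ← helper x hxzero (fun _ => True) inferInstance]
      have h2 : univ.filter (fun _ : Finset τ => True) = univ := Finset.filter_true _
      rw [h2, hx1]
      simp [hbb, hcase]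
    · have h1 : ∑ w : {w : Finset τ // x w ≠ 0}, V (some t) w * x ↑w
          = ∑ w : {w : Finset τ // x w ≠ 0}, (if t ∈ (w : Finset τ) then x ↑w else 0) := by
        apply Finset.sum_congr rfl; intro w _
        have hv2' : V (some t) w = if t ∈ (w : Finset τ) then (1:ℝ) else 0 := rfl
        rw [hv2']
        by_cases h : t ∈ (w : Finset τ) <;> simp [h]
      rw [h1, ← helper x hxzero (fun w => t ∈ w) inferInstance, hxm t]
      simp [hbb, hcase]
  -- v as indicator dot product
  have hvexp : v = ∑ w : {w : Finset τ // x w ≠ 0},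
      (if (w : Finset τ) ∈ W then (1:ℝ) else 0) * xS w := by
    have h1 : ∑ w ∈ W, x w = ∑ w ∈ univ.filter (fun w => w ∈ W), x w := by
      rw [Finset.filter_univ_mem]
    rw [← hxW, h1, helper x hxzero _ inferInstance]
    apply Finset.sum_congr rfl
    intro w _
    by_cases h : (w : Finset τ) ∈ W <;> simp [h, hxS]
  -- solve the system
  have hxSeq : xS = A⁻¹ *ᵥ bb := by
    rw [← hsys, Matrix.mulVec_mulVec, Matrix.nonsing_inv_mul A (isUnit_iff_ne_zero.2 hdet),
      Matrix.one_mulVec]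
  have hAinv : A⁻¹ = (A.det)⁻¹ • A.adjugate := by
    rw [Matrix.inv_def, Ring.inverse_eq_inv]
  -- numerator over ℝ
  set Nr : ℝ := ∑ w : {w : Finset τ // x w ≠ 0},
      (if (w : Finset τ) ∈ W then (1:ℝ) else 0) * (A.adjugate *ᵥ bb) w with hNr
  have hvNr : v * A.det = Nr := by
    have h1 : v = (A.det)⁻¹ * Nr := by
      rw [hvexp, hNr]
      rw [hxSeq, hAinv, Finset.mul_sum]
      apply Finset.sum_congr rfl
      intro w _
      simp only [Matrix.smul_mulVec, Pi.smul_apply, smul_eq_mul]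
      ring
    rw [h1]
    field_simp
  -- integer data
  set D : ℕ := ∏ t : τ, den t with hD
  have hD0 : 0 < D := Finset.prod_pos (fun t _ => hden t)
  set Az : Matrix {w : Finset τ // x w ≠ 0} {w : Finset τ // x w ≠ 0} ℤ :=
    fun i w => (gj (e i)).elim 1 (fun t => if t ∈ (w : Finset τ) then 1 else 0) with hAz
  have hAcast : A = (Int.castRingHom ℝ).mapMatrix Az := by
    ext i w
    rw [hAV i w, RingHom.mapMatrix_apply]
    rcases hcase : gj (e i) with _ | t
    · have hv1' : V none w = 1 := rfl
      rw [hv1', Matrix.map_apply]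
      simp [hAz, hcase]
    · have hv2' : V (some t) w = if t ∈ (w : Finset τ) then (1:ℝ) else 0 := rfl
      rw [Matrix.map_apply]
      simp only [hAz, Matrix.map_apply, hcase, Option.elim, hv2']
      by_cases h : t ∈ (w : Finset τ) <;> simp [h]
  set bz : {w : Finset τ // x w ≠ 0} → ℤ :=
    fun i => (gj (e i)).elim (D : ℤ) (fun t => (num t : ℤ) * ((D / den t : ℕ) : ℤ)) with hbz
  have hbzcast : ∀ i, ((bz i : ℤ) : ℝ) = (D : ℝ) * bb i := by
    intro i
    rcases hcase : gj (e i) with _ | t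
    · simp [hbz, hbb, hcase]
    · have hdvd : den t ∣ D := Finset.dvd_prod_of_mem den (mem_univ t)
      have hcast : ((D / den t : ℕ) : ℝ) = (D : ℝ) / (den t : ℝ) :=
        Nat.cast_div hdvd (by exact_mod_cast (hden t).ne')
      simp only [hbz, hbb, hcase, Option.elim, Int.cast_mul, Int.cast_natCast]
      rw [hcast, hfrac t]
      field_simp
  have hdetcast : ((Az.det : ℤ) : ℝ) = A.det := by
    rw [hAcast, ← RingHom.map_det]
    rfl
  have hdetz : Az.det ≠ 0 := by
    intro h
    apply hdet
    rw [← hdetcast, h]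
    simp
  have hadjcast : ∀ i w, ((Az.adjugate i w : ℤ) : ℝ) = A.adjugate i w := by
    intro i w
    rw [hAcast]
    have := (Int.castRingHom ℝ).map_adjugate Az
    rw [← this]
    rfl
  set Nz : ℤ := ∑ w : {w : Finset τ // x w ≠ 0},
      (if (w : Finset τ) ∈ W then (1:ℤ) else 0) * (Az.adjugate *ᵥ bz) w with hNz
  have hNzcast : ((Nz : ℤ) : ℝ) = (D : ℝ) * Nr := by
    rw [hNz, hNr, Finset.mul_sum]
    push_cast
    apply Finset.sum_congr rfl
    intro w _
    have h1 : (((Az.adjugate *ᵥ bz) w : ℤ) : ℝ) = (D : ℝ) * (A.adjugate *ᵥ bb) w := by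
      simp only [Matrix.mulVec, dotProduct]
      push_cast
      rw [Finset.mul_sum]
      apply Finset.sum_congr rfl
      intro u _
      rw [hadjcast w u, hbzcast u]
      ring
    rw [h1]
    by_cases h : (w : Finset τ) ∈ W <;> simp [h]
  -- main rational equation
  have hmain : v * ((Az.det * D : ℤ) : ℝ) = ((Nz : ℤ) : ℝ) := by
    push_cast
    rw [hNzcast, ← hvNr, ← hdetcast]
    push_cast
    ring
  set q : ℤ := Az.det * (D : ℤ) with hq
  have hq0 : q ≠ 0 := mul_ne_zero hdetz (by exact_mod_cast hD0.ne')
  refine ⟨Nz.natAbs, q.natAbs, ?_, ?_, ?_, ?_⟩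
  · exact Int.natAbs_pos.mpr hq0
  · -- η ≤ δ
    have h1 : ((Nz.natAbs : ℕ) : ℝ) = |((Nz : ℤ) : ℝ)| := by
      rw [Nat.cast_natAbs, Int.cast_abs]
    have h2 : ((q.natAbs : ℕ) : ℝ) = |((q : ℤ) : ℝ)| := by
      rw [Nat.cast_natAbs, Int.cast_abs]
    have h3 : ((Nz : ℤ) : ℝ) = v * ((q : ℤ) : ℝ) := by rw [← hmain]
    have h4 : ((Nz.natAbs : ℕ) : ℝ) = v * ((q.natAbs : ℕ) : ℝ) := by
      rw [h1, h2, h3, abs_mul, abs_of_nonneg hv0]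
    have h5 : ((Nz.natAbs : ℕ) : ℝ) ≤ ((q.natAbs : ℕ) : ℝ) := by
      rw [h4]
      have : (0:ℝ) ≤ ((q.natAbs : ℕ) : ℝ) := Nat.cast_nonneg _
      nlinarith
    exact_mod_cast h5
  · -- δ bound
    have h1 : q.natAbs = Az.det.natAbs * D := by
      rw [hq, Int.natAbs_mul]
      simp
    rw [h1]
    apply Nat.mul_le_mul
    · have h2 := det_abs_le_factorial Az (by
        intro i w
        rcases hcase : gj (e i) with _ | t
        · simp [hAz, hcase]
        · simp only [hAz, hcase, Option.elim]
          by_cases h : t ∈ (w : Finset τ) <;> simp [h])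
      have h3 : (Az.det.natAbs : ℤ) ≤ ((Fintype.card {w : Finset τ // x w ≠ 0}).factorial : ℤ) := by
        rw [← Int.abs_eq_natAbs]
        exact h2
      have h4 : Az.det.natAbs ≤ (Fintype.card {w : Finset τ // x w ≠ 0}).factorial := by
        exact_mod_cast h3
      apply le_trans h4
      apply Nat.factorial_le
      rw [← hcard]
      exact hcard_le
    · rw [hD]
      have := Finset.prod_le_pow_card univ den a (fun t _ => hdena t)
      simpa using this
  · -- v = η/δ
    have h2 : ((q.natAbs : ℕ) : ℝ) = |((q : ℤ) : ℝ)| := by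
      rw [Nat.cast_natAbs, Int.cast_abs]
    have h1 : ((Nz.natAbs : ℕ) : ℝ) = v * ((q.natAbs : ℕ) : ℝ) := by
      have h3 : ((Nz : ℤ) : ℝ) = v * ((q : ℤ) : ℝ) := by rw [← hmain]
      have h4 : ((Nz.natAbs : ℕ) : ℝ) = |((Nz : ℤ) : ℝ)| := by
        rw [Nat.cast_natAbs, Int.cast_abs]
      rw [h4, h2, h3, abs_mul, abs_of_nonneg hv0]
    have hqpos : (0:ℝ) < ((q.natAbs : ℕ) : ℝ) := by
      have : 0 < q.natAbs := Int.natAbs_pos.mpr hq0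
      exact_mod_cast this
    rw [h1]
    field_simp


private lemma key_rat (p : τ → ℝ) (num den : τ → ℕ) (hden : ∀ t, 0 < den t)
    (hfrac : ∀ t, p t = (num t : ℝ) / (den t : ℝ))
    (a : ℕ) (hdena : ∀ t, den t ≤ a)
    (E : Set (Finset τ)) (W : Finset (Finset τ)) (v : ℝ) (hv0 : 0 ≤ v) (hv1 : v ≤ 1)
    (hne : ∃ y, IsModel p E y ∧ ∑ w ∈ W, y w = v)
    (hface : ∀ y z, IsModel p E y → IsModel p E z →
      (∑ w ∈ W, y w) + (∑ w ∈ W, z w) = 2 * v → ∑ w ∈ W, y w = v) :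
    ∃ η δ : ℕ, 0 < δ ∧ η ≤ δ ∧
      δ ≤ (Fintype.card τ + 1).factorial * a ^ (Fintype.card τ) ∧
      v = (η : ℝ) / (δ : ℝ) := by
  classical
  obtain ⟨x, hxQ'⟩ := (aux_compact p E W v).extremePoints_nonempty hne
  obtain ⟨hxQ, hxext⟩ := mem_extremePoints.1 hxQ'
  have hspan := aux_span p E W v hface x hxQ hxext
  obtain ⟨⟨⟨hx0, hx1, hxm⟩, hxE⟩, hxW⟩ := hxQ
  exact aux_cramer p num den hden hfrac a hdena W v hv0 hv1 x hx0 hx1 hxm hxW hspan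

end Aux

/-- if the tuple probabilities are rationals `num t / den t`,
`a` is the maximum of all numerators and denominators, and `m = |T| + 3`, then
the minimum and maximum probabilities of a query answer (over all models) are
rationals `η/δ` with `0 ≤ η ≤ (m·a)^m` and `0 < δ ≤ (m·a)^m`. -/
theorem query_probability_bounded_fractions
    [Nonempty τ]
    (p : τ → ℝ) (hp : ∀ t, 0 ≤ p t ∧ p t ≤ 1)
    (num den : τ → ℕ) (hden : ∀ t, 0 < den t)
    (hfrac : ∀ t, p t = (num t : ℝ) / (den t : ℝ))
    (a : ℕ) (ha : a = Finset.univ.sup (fun t => max (num t) (den t)))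
    (m : ℕ) (hm : m = Fintype.card τ + 3)
    (E : Set (Finset τ)) (hedges : ∀ e ∈ E, e.Nonempty)
    (hcons : Consistent p E)
    (W : Finset (Finset τ)) (pmin pmax : ℝ)
    (hmin : IsLeast {x : ℝ | ∃ Pr, IsModel p E Pr ∧ (∑ w ∈ W, Pr w) = x} pmin)
    (hmax : IsGreatest {x : ℝ | ∃ Pr, IsModel p E Pr ∧ (∑ w ∈ W, Pr w) = x} pmax) :
    (∃ η δ : ℕ, 0 < δ ∧ η ≤ (m * a) ^ m ∧ δ ≤ (m * a) ^ m ∧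
        pmin = (η : ℝ) / (δ : ℝ)) ∧
    (∃ η δ : ℕ, 0 < δ ∧ η ≤ (m * a) ^ m ∧ δ ≤ (m * a) ^ m ∧
        pmax = (η : ℝ) / (δ : ℝ)) := by
  classical
  set n := Fintype.card τ with hn
  -- facts about a
  have hdena : ∀ t, den t ≤ a := by
    intro t
    rw [ha]
    exact le_trans (le_max_right _ _) (Finset.le_sup (f := fun t => max (num t) (den t)) (mem_univ t))
  have ha1 : 1 ≤ a := le_trans (hden (Classical.arbitrary τ)) (hdena _)
  -- the bound
  have hbound : (n + 1).factorial * a ^ n ≤ (m * a) ^ m := by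
    have h1 : (n + 1).factorial ≤ (n + 1) ^ (n + 1) := Nat.factorial_le_pow _
    have h2 : (n + 1) ^ (n + 1) ≤ m ^ m := by
      calc (n + 1) ^ (n + 1) ≤ m ^ (n + 1) :=
            Nat.pow_le_pow_left (by omega) _
        _ ≤ m ^ m := Nat.pow_le_pow_right (by omega) (by omega)
    have h3 : a ^ n ≤ a ^ m := Nat.pow_le_pow_right ha1 (by omega)
    calc (n + 1).factorial * a ^ n ≤ m ^ m * a ^ m :=
          Nat.mul_le_mul (le_trans h1 h2) h3
      _ = (m * a) ^ m := (Nat.mul_pow m a m).symm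
  -- sums of models lie in [0,1]
  have hrange : ∀ y, IsModel p E y → 0 ≤ (∑ w ∈ W, y w) ∧ (∑ w ∈ W, y w) ≤ 1 := by
    intro y hy
    obtain ⟨⟨hy0, hy1, _⟩, _⟩ := hy
    constructor
    · exact Finset.sum_nonneg (fun w _ => hy0 w)
    · calc ∑ w ∈ W, y w ≤ ∑ w : Finset τ, y w :=
            Finset.sum_le_sum_of_subset_of_nonneg (Finset.subset_univ W)
              (fun w _ _ => hy0 w)
        _ = 1 := hy1
  constructor
  · -- pmin
    obtain ⟨Pr₀, hPr₀, hPr₀v⟩ := hmin.1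
    have hv0 : 0 ≤ pmin := hPr₀v ▸ (hrange Pr₀ hPr₀).1
    have hv1 : pmin ≤ 1 := hPr₀v ▸ (hrange Pr₀ hPr₀).2
    have hface : ∀ y z, IsModel p E y → IsModel p E z →
        (∑ w ∈ W, y w) + (∑ w ∈ W, z w) = 2 * pmin → ∑ w ∈ W, y w = pmin := by
      intro y z hy hz hsum
      have h1 : pmin ≤ ∑ w ∈ W, y w := hmin.2 ⟨y, hy, rfl⟩
      have h2 : pmin ≤ ∑ w ∈ W, z w := hmin.2 ⟨z, hz, rfl⟩
      linarith
    obtain ⟨η, δ, hδ0, hηδ, hδb, hv⟩ := key_rat p num den hden hfrac a hdena E W pmin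
      hv0 hv1 ⟨Pr₀, hPr₀, hPr₀v⟩ hface
    exact ⟨η, δ, hδ0, le_trans hηδ (le_trans hδb hbound), le_trans hδb hbound, hv⟩
  · -- pmax
    obtain ⟨Pr₀, hPr₀, hPr₀v⟩ := hmax.1
    have hv0 : 0 ≤ pmax := hPr₀v ▸ (hrange Pr₀ hPr₀).1
    have hv1 : pmax ≤ 1 := hPr₀v ▸ (hrange Pr₀ hPr₀).2
    have hface : ∀ y z, IsModel p E y → IsModel p E z →
        (∑ w ∈ W, y w) + (∑ w ∈ W, z w) = 2 * pmax → ∑ w ∈ W, y w = pmax := by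
      intro y z hy hz hsum
      have h1 : ∑ w ∈ W, y w ≤ pmax := hmax.2 ⟨y, hy, rfl⟩
      have h2 : ∑ w ∈ W, z w ≤ pmax := hmax.2 ⟨z, hz, rfl⟩
      linarith
    obtain ⟨η, δ, hδ0, hηδ, hδb, hv⟩ := key_rat p num den hden hfrac a hdena E W pmax
      hv0 hv1 ⟨Pr₀, hPr₀, hPr₀v⟩ hface
    exact ⟨η, δ, hδ0, le_trans hηδ (le_trans hδb hbound), le_trans hδb hbound, hv⟩
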